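/- arXiv:2306.15446 — 2 statements merged into one kernel-verified Lean document; each statement's English description precedes it below -/
import Mathlib

section
/- (Theorem A.1, rigidity of measurable a.e. isometries) Let Ω ⊂ ℝ^d be a bounded domain (connected open set). Suppose v : Ω → ℝ^d is Lebesgue measurable and satisfies |v(x) − v(y)| = |x − y| for 2d-dimensional-Lebesgue-almost every pair (x,y) ∈ Ω × Ω. Then there exist a constant matrix F ∈ O(d) and a vector b ∈ ℝ^d such that v(x) = Fx + b for almost every x ∈ Ω. -/
open MeasureTheory Filter Topology Metric Set
open scoped ENNReal

noncomputable section

open Module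

/-- ℝ^d with the Euclidean norm. -/
abbrev Vec (d : ℕ) := EuclideanSpace ℝ (Fin d)

open scoped RealInnerProductSpace

private lemma inner_eq_of_norm_eq' {E : Type*} [NormedAddCommGroup E] [InnerProductSpace ℝ E]
    {p q p' q' : E} (h1 : ‖p‖ = ‖p'‖) (h2 : ‖q‖ = ‖q'‖) (h3 : ‖p - q‖ = ‖p' - q'‖) :
    ⟪p, q⟫ = ⟪p', q'⟫ := by
  have e1 := @norm_sub_sq_real E _ _ p q
  have e2 := @norm_sub_sq_real E _ _ p' q'
  rw [h1, h2, h3] at e1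
  linarith

/-- **Theorem A.1** (rigidity of measurable a.e. isometries). If a measurable map
`v : Ω → ℝ^d` on a bounded domain satisfies `|v(x)-v(y)| = |x-y|` for a.e.
`(x,y) ∈ Ω × Ω`, then `v(x) = Fx + b` a.e. on `Ω` for some `F ∈ O(d)` and `b ∈ ℝ^d`. -/
theorem rigidity_of_measurable_ae_isometries
    {d : ℕ} (Ω : Set (Vec d)) (hΩopen : IsOpen Ω) (hΩconn : IsConnected Ω)
    (hΩbdd : Bornology.IsBounded Ω)
    (v : Vec d → Vec d) (hv : Measurable v)
    (hiso : ∀ᵐ z : Vec d × Vec d ∂((volume.restrict Ω).prod (volume.restrict Ω)),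
      ‖v z.1 - v z.2‖ = ‖z.1 - z.2‖) :
    ∃ F : Matrix (Fin d) (Fin d) ℝ, F.transpose * F = 1 ∧
      ∃ b : Vec d, ∀ᵐ x ∂(volume.restrict Ω), v x = Matrix.toEuclideanLin F x + b := by
  classical
  set μ := volume.restrict Ω with hμdef
  have hμ0 : μ ≠ 0 := by
    have hpos : 0 < volume Ω := hΩopen.measure_pos volume hΩconn.nonempty
    intro h
    have : μ Set.univ = volume Ω := by simp [hμdef]
    rw [h] at this
    simp at this
    exact hpos.ne' this.symm
  have : (ae μ).NeBot := ae_neBot.mpr hμ0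
  have h1 : ∀ᵐ x ∂μ, ∀ᵐ y ∂μ, ‖v x - v y‖ = ‖x - y‖ := MeasureTheory.Measure.ae_ae_of_ae_prod hiso
  set Good : Vec d → Prop := fun x => ∀ᵐ y ∂μ, ‖v x - v y‖ = ‖x - y‖ with hGood
  -- selection of good affinely independent points
  have sel : ∀ n, n ≤ d → ∃ (w₀ : Vec d) (w : Fin n → Vec d),
      Good w₀ ∧ (∀ i, Good (w i)) ∧
      (∀ i, ‖v w₀ - v (w i)‖ = ‖w₀ - w i‖) ∧
      (∀ i j, ‖v (w i) - v (w j)‖ = ‖w i - w j‖) ∧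
      LinearIndependent ℝ (fun i => w i - w₀) := by
    intro n
    induction n with
    | zero =>
      intro _
      obtain ⟨w₀, hw₀⟩ := h1.exists
      exact ⟨w₀, Fin.elim0, hw₀, fun i => i.elim0, fun i => i.elim0, fun i => i.elim0,
        linearIndependent_empty_type⟩
    | succ n ih =>
      intro hn
      obtain ⟨w₀, w, hg0, hgi, h0i, hij, hli⟩ := ih (Nat.le_of_succ_le hn)
      set S : Submodule ℝ (Vec d) := Submodule.span ℝ (Set.range fun i => w i - w₀) with hSdef
      have hS : S ≠ ⊤ := by
        intro hTop
        have hle : finrank ℝ (Vec d) ≤ Fintype.card (Fin n) :=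
          finrank_le_of_span_eq_top hTop
        simp [finrank_euclideanSpace_fin] at hle
        omega
      have hnull : μ {x | x - w₀ ∈ S} = 0 := by
        have hv0 : volume {x : Vec d | x - w₀ ∈ S} = 0 := by
          have heq : {x : Vec d | x - w₀ ∈ S} = (fun x => x + (-w₀)) ⁻¹' (S : Set (Vec d)) := by
            ext x; simp [sub_eq_add_neg]
          rw [heq, measure_preimage_add_right]
          exact Measure.addHaar_submodule volume S hS
        exact le_antisymm (le_trans (Measure.restrict_le_self _) hv0.le) zero_le
      have hspanae : ∀ᵐ x ∂μ, x - w₀ ∉ S := by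
        rw [ae_iff]
        simpa using hnull
      have hae : ∀ᵐ x ∂μ, Good x ∧ ‖v w₀ - v x‖ = ‖w₀ - x‖ ∧
          (∀ i, ‖v (w i) - v x‖ = ‖w i - x‖) ∧ x - w₀ ∉ S :=
        h1.and (hg0.and ((ae_all_iff.mpr hgi).and hspanae))
      obtain ⟨x, hx1, hx2, hx3, hx4⟩ := hae.exists
      refine ⟨w₀, Fin.snoc w x, hg0, ?_, ?_, ?_, ?_⟩
      · intro i
        refine Fin.lastCases ?_ ?_ i
        · simpa using hx1
        · intro j; simpa using hgi j
      · intro i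
        refine Fin.lastCases ?_ ?_ i
        · simpa using hx2
        · intro j; simpa using h0i j
      · intro i j
        refine Fin.lastCases ?_ ?_ i
        · refine Fin.lastCases ?_ ?_ j
          · simp
          · intro k
            simp only [Fin.snoc_last, Fin.snoc_castSucc]
            rw [norm_sub_rev, hx3 k, norm_sub_rev]
        · intro k
          refine Fin.lastCases ?_ ?_ j
          · simp only [Fin.snoc_last, Fin.snoc_castSucc]
            exact hx3 k
          · intro l
            simp only [Fin.snoc_castSucc]
            exact hij k l
      · show LinearIndependent ℝ ((fun y => y - w₀) ∘ Fin.snoc w x)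
        rw [Fin.comp_snoc]
        exact linearIndependent_fin_snoc.mpr ⟨hli, hx4⟩
  rcases Nat.eq_zero_or_pos d with hd0 | hd
  · subst hd0
    refine ⟨1, by simp, 0, ?_⟩
    filter_upwards with x
    ext i
    exact i.elim0
  have : Nonempty (Fin d) := ⟨⟨0, hd⟩⟩
  obtain ⟨w₀, w, hg0, hgi, h0i, hij, hli⟩ := sel d le_rfl
  have hcard : Fintype.card (Fin d) = finrank ℝ (Vec d) := by
    simp [finrank_euclideanSpace_fin]
  set B : Basis (Fin d) ℝ (Vec d) := basisOfLinearIndependentOfCardEqFinrank hli hcard with hBdef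
  have hB : ∀ i, B i = w i - w₀ := by
    intro i
    rw [hBdef, coe_basisOfLinearIndependentOfCardEqFinrank]
  set a : Fin d → Vec d := fun i => v (w i) - v w₀ with hadef
  set L : Vec d →ₗ[ℝ] Vec d := B.constr ℝ a with hLdef
  have hLB : ∀ i, L (B i) = a i := fun i => B.constr_basis ℝ a i
  have gram : ∀ i j, ⟪a i, a j⟫ = ⟪w i - w₀, w j - w₀⟫ := by
    intro i j
    apply inner_eq_of_norm_eq'
    · show ‖v (w i) - v w₀‖ = ‖w i - w₀‖
      rw [norm_sub_rev, h0i i, norm_sub_rev]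
    · show ‖v (w j) - v w₀‖ = ‖w j - w₀‖
      rw [norm_sub_rev, h0i j, norm_sub_rev]
    · show ‖(v (w i) - v w₀) - (v (w j) - v w₀)‖ = ‖(w i - w₀) - (w j - w₀)‖
      rw [sub_sub_sub_cancel_right, sub_sub_sub_cancel_right]
      exact hij i j
  have key : ∀ y z : Vec d, ⟪L y, L z⟫ = ⟪y, z⟫ := by
    have hbil : ((innerₗ (Vec d)).compl₁₂ L L : Vec d →ₗ[ℝ] Vec d →ₗ[ℝ] ℝ)
        = innerₗ (Vec d) := by
      apply LinearMap.ext_basis (b₁ := B) (b₂ := B)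
      intro i j
      rw [LinearMap.compl₁₂_apply, innerₗ_apply_apply,
        innerₗ_apply_apply, hLB i, hLB j, hB i, hB j]
      exact gram i j
    intro y z
    have := LinearMap.congr_fun (LinearMap.congr_fun hbil y) z
    simpa [innerₗ_apply_apply] using this
  have h0 : ∀ y, L y = 0 → y = 0 := by
    intro y hy
    have hk := key y y
    rw [hy, inner_zero_left] at hk
    exact inner_self_eq_zero.mp hk.symm
  have hinj : Function.Injective L :=
    LinearMap.ker_eq_bot.mp (LinearMap.ker_eq_bot'.mpr h0)
  have hsurj : Function.Surjective L := (LinearMap.injective_iff_surjective).mp hinj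
  have hspan : Submodule.span ℝ (Set.range a) = ⊤ := by
    have ha : a = L ∘ B := funext fun i => (hLB i).symm
    rw [ha, Set.range_comp, ← Submodule.map_span, B.span_eq, Submodule.map_top,
      LinearMap.range_eq_top.mpr hsurj]
  -- the matrix
  set F : Matrix (Fin d) (Fin d) ℝ := Matrix.toEuclideanLin.symm L with hFdef
  have hFL : Matrix.toEuclideanLin F = L := Matrix.toEuclideanLin.apply_symm_apply L
  have hFcol : ∀ k l, F k l = L (EuclideanSpace.single l 1) k := by
    intro k l
    rw [← hFL]
    rw [Matrix.toEuclideanLin_apply]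
    rw [PiLp.ofLp_single, Matrix.mulVec_single]
    simp
  have hFT : F.transpose * F = 1 := by
    ext i j
    have hL : ⟪L (EuclideanSpace.single i 1), L (EuclideanSpace.single j 1)⟫
        = ⟪(EuclideanSpace.single i 1 : Vec d), EuclideanSpace.single j 1⟫ := key _ _
    rw [PiLp.inner_apply, PiLp.inner_apply] at hL
    simp only [RCLike.inner_apply, conj_trivial] at hL
    rw [Matrix.mul_apply, Matrix.one_apply]
    calc (∑ k, F.transpose i k * F k j) = ∑ k, L (EuclideanSpace.single i 1) k *
          L (EuclideanSpace.single j 1) k := by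
          refine Finset.sum_congr rfl fun k _ => ?_
          rw [Matrix.transpose_apply, hFcol, hFcol]
      _ = ∑ k, (EuclideanSpace.single i 1 : Vec d) k * (EuclideanSpace.single j 1 : Vec d) k := by
          simpa [mul_comm, eq_comm] using hL
      _ = if i = j then 1 else 0 := by
          simp [EuclideanSpace.single_apply, Finset.sum_ite_eq', eq_comm]
  refine ⟨F, hFT, v w₀ - L w₀, ?_⟩
  have hgood : ∀ᵐ x ∂μ, (‖v w₀ - v x‖ = ‖w₀ - x‖) ∧ ∀ i, ‖v (w i) - v x‖ = ‖w i - x‖ :=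
    hg0.and (ae_all_iff.mpr hgi)
  filter_upwards [hgood] with x hx
  obtain ⟨hx0, hxi⟩ := hx
  have claims : ∀ i, ⟪(v x - v w₀) - L (x - w₀), a i⟫ = 0 := by
    intro i
    have c1 : ⟪v x - v w₀, a i⟫ = ⟪x - w₀, w i - w₀⟫ := by
      apply inner_eq_of_norm_eq'
      · rw [norm_sub_rev, hx0, norm_sub_rev]
      · show ‖v (w i) - v w₀‖ = ‖w i - w₀‖
        rw [norm_sub_rev, h0i i, norm_sub_rev]
      · show ‖(v x - v w₀) - (v (w i) - v w₀)‖ = ‖(x - w₀) - (w i - w₀)‖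
        rw [sub_sub_sub_cancel_right, sub_sub_sub_cancel_right,
          norm_sub_rev, hxi i, norm_sub_rev]
    have c2 : ⟪L (x - w₀), a i⟫ = ⟪x - w₀, w i - w₀⟫ := by
      rw [← hLB i, key, hB i]
    rw [inner_sub_left, c1, c2, sub_self]
  have hD : (v x - v w₀) - L (x - w₀) = 0 := by
    set D := (v x - v w₀) - L (x - w₀) with hDdef
    have hmem : D ∈ Submodule.span ℝ (Set.range a) := by
      rw [hspan]; exact Submodule.mem_top
    obtain ⟨c, hc⟩ := (Submodule.mem_span_range_iff_exists_fun ℝ).mp hmem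
    have hDD : ⟪D, D⟫ = 0 := by
      have hsum : ⟪D, ∑ i, c i • a i⟫ = 0 := by
        rw [inner_sum]
        refine Finset.sum_eq_zero fun i _ => ?_
        rw [real_inner_smul_right, claims i, mul_zero]
      rwa [hc] at hsum
    exact inner_self_eq_zero.mp hDD
  have hsub : v x - v w₀ = L x - L w₀ := by
    have := sub_eq_zero.mp hD
    rw [map_sub] at this
    exact this
  have hfin : v x = L x + (v w₀ - L w₀) := by
    have h2 := eq_add_of_sub_eq hsub
    rw [h2]; abel
  rw [hFL]
  exact hfin
end
end

section
/- (Lemma 3.5, liminf inequality for linearization) For every u ∈ L²(Ω;ℝ^d), every sequence ε_j → 0⁺, and every sequence u_j converging to u strongly in L²(Ω;ℝ^d), one has liminf_{j→∞} Ē_{ε_j}(u_j) ≥ Ē₀(u). -/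
open MeasureTheory Filter Topology Metric Set
open scoped ENNReal

noncomputable section

/-- Difference quotient of the identity: `𝒟i(y,x) = (y-x)/|y-x|`. -/
def Di {d : ℕ} (y x : Vec d) : Vec d := ‖y - x‖⁻¹ • (y - x)

/-- Difference quotient `𝒟u(y,x) = (u(y)-u(x))/|y-x|`. -/
def Dq {d : ℕ} (u : Vec d → Vec d) (y x : Vec d) : Vec d := ‖y - x‖⁻¹ • (u y - u x)

/-- The nonlinear double integral `∫_Ω∫_Ω w(y-x, |𝒟i(y,x) + ε𝒟u(y,x)| - 1) dy dx`. -/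
def wIntegral {d : ℕ} (w : Vec d → ℝ → ℝ) (ε : ℝ) (u : Vec d → Vec d)
    (Ω : Set (Vec d)) : ℝ≥0∞ :=
  ∫⁻ x in Ω, ∫⁻ y in Ω, ENNReal.ofReal (w (y - x) (‖Di y x + ε • Dq u y x‖ - 1))

/-- The load term `∫_Ω l·u dx`. -/
def loadTerm {d : ℕ} (l u : Vec d → Vec d) (Ω : Set (Vec d)) : ℝ :=
  ∫ x in Ω, (inner ℝ (l x) (u x) : ℝ)

open Classical in
/-- The extended rescaled nonlinear energy `Ē_ε(u)`, with value `+∞` when the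
double integral is infinite. -/
def Enl {d : ℕ} (w : Vec d → ℝ → ℝ) (l : Vec d → Vec d) (Ω : Set (Vec d)) (ε : ℝ)
    (u : Vec d → Vec d) : EReal :=
  if wIntegral w ε u Ω ≠ ⊤ then
    (((ε ^ 2)⁻¹ * (wIntegral w ε u Ω).toReal - loadTerm l u Ω : ℝ) : EReal)
  else ⊤

/-- The quadratic double integral `∫_Ω∫_Ω ρ(y-x) (𝒟u(y,x)·𝒟i(y,x))² dy dx`. -/
def qIntegral {d : ℕ} (ρ : Vec d → ℝ) (u : Vec d → Vec d) (Ω : Set (Vec d)) : ℝ≥0∞ :=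
  ∫⁻ x in Ω, ∫⁻ y in Ω,
    ENNReal.ofReal (ρ (y - x) * (inner ℝ (Dq u y x) (Di y x) : ℝ) ^ 2)

/-- Membership in the energy space `X_ρ(Ω)`. -/
def MemXrho {d : ℕ} (ρ : Vec d → ℝ) (u : Vec d → Vec d) (Ω : Set (Vec d)) : Prop :=
  MemLp u 2 (volume.restrict Ω) ∧ qIntegral ρ u Ω ≠ ⊤

open Classical in
/-- The extended linearized bond-based peridynamic energy `Ē₀(u)`. -/
def Elin {d : ℕ} (ρ : Vec d → ℝ) (l : Vec d → Vec d) (Ω : Set (Vec d))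
    (u : Vec d → Vec d) : EReal :=
  if MemXrho ρ u Ω then
    (((1 / 2) * (qIntegral ρ u Ω).toReal - loadTerm l u Ω : ℝ) : EReal)
  else ⊤

/-- `Ω ⊆ ℝ^d` has Lipschitz boundary: near every boundary point, after choosing a
coordinate direction `σ`, the set is the region above the graph of a Lipschitz
function `γ` of the remaining coordinates. -/
def HasLipschitzBoundary {d : ℕ} (Ω : Set (Vec d)) : Prop :=
  ∀ x₀ ∈ frontier Ω, ∃ r : ℝ, 0 < r ∧ ∃ σ : Fin d, ∃ γ : Vec d → ℝ, ∃ L : NNReal,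
    LipschitzWith L γ ∧ (∀ x y : Vec d, (∀ i, i ≠ σ → x i = y i) → γ x = γ y) ∧
    Ω ∩ Metric.ball x₀ r = {x ∈ Metric.ball x₀ r | γ x < x σ}

/-- Conditions i)–iv) on the microelastic potential `w(ξ,s) = k(ξ)Ψ(ξ,s)`, where
`Ψ'` and `Ψ''` are the first and second partial derivatives of `Ψ` in `s` on
`[-δ₀,δ₀]`. -/
def MicroelasticAssumptions {d : ℕ} (k : Vec d → ℝ) (Ψ Ψ' Ψ'' : Vec d → ℝ → ℝ)
    (δ₀ c₁ c₂ : ℝ) : Prop :=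
  Measurable k ∧ (∀ ξ, 0 ≤ k ξ) ∧
  (∀ s : ℝ, Measurable fun ξ => Ψ ξ s) ∧
  (∀ ξ, ContinuousOn (Ψ ξ) (Ici (-1))) ∧
  (∀ ξ, ∀ s ∈ Ici (-1 : ℝ), 0 ≤ Ψ ξ s) ∧
  (∀ ξ, ∀ K : Set ℝ, IsCompact K → K ⊆ Ici (-1) →
    ∃ L : NNReal, LipschitzOnWith L (Ψ ξ) K) ∧
  0 < δ₀ ∧
  (∀ ξ, ∀ s ∈ Icc (-δ₀) δ₀, HasDerivWithinAt (Ψ ξ) (Ψ' ξ s) (Icc (-δ₀) δ₀) s) ∧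
  (∀ ξ, ∀ s ∈ Icc (-δ₀) δ₀, HasDerivWithinAt (Ψ' ξ) (Ψ'' ξ s) (Icc (-δ₀) δ₀) s) ∧
  (∀ ξ, ContinuousOn (Ψ'' ξ) (Icc (-δ₀) δ₀)) ∧
  (∀ ξ, Ψ ξ 0 = 0) ∧ (∀ ξ, Ψ' ξ 0 = 0) ∧ (∀ ξ, 0 < Ψ'' ξ 0) ∧
  (∀ s₀ : ℝ, 0 < s₀ → ∃ c : ℝ, 0 < c ∧ ∀ ξ, ∀ s : ℝ, -1 ≤ s → s₀ ≤ |s| → c ≤ Ψ ξ s) ∧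
  0 < c₁ ∧ (∀ ξ, ∀ s : ℝ, |s| < δ₀ → c₁ * (k ξ * s ^ 2) ≤ k ξ * Ψ ξ s) ∧
  0 < c₂ ∧ (∀ ξ, ∀ s : ℝ, |s| < δ₀ → k ξ * |Ψ'' ξ s| ≤ c₂ * k ξ) ∧
  LocallyIntegrable (fun ξ => k ξ * Ψ'' ξ 0) (volume : Measure (Vec d))

section Helpers

lemma tendsto_slope_seq (f : ℝ → ℝ) (y δ₀ s : ℝ)
    (hs : s ∈ Icc (-δ₀) δ₀) (h : ℕ → ℝ) (hpos : ∀ n, 0 < h n)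
    (hmem : ∀ n, s + h n ≤ δ₀) (hlim : Tendsto h atTop (𝓝 0))
    (hd : HasDerivWithinAt f y (Icc (-δ₀) δ₀) s) :
    Tendsto (fun n => (f (s + h n) - f s) / h n) atTop (𝓝 y) := by
  have hslope := hasDerivWithinAt_iff_tendsto_slope.mp hd
  have hgs : Tendsto (fun n => s + h n) atTop (𝓝[Icc (-δ₀) δ₀ \ {s}] s) := by
    rw [tendsto_nhdsWithin_iff]
    constructor
    · have : Tendsto (fun n => s + h n) atTop (𝓝 (s + 0)) :=
        tendsto_const_nhds.add hlim
      simpa using this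
    · filter_upwards with n
      refine ⟨⟨?_, hmem n⟩, ?_⟩
      · have := (hpos n).le
        linarith [hs.1]
      · simp only [mem_singleton_iff]
        intro hcon
        have := hpos n
        nlinarith [congrArg (fun x => x - s) hcon]
  have := hslope.comp hgs
  refine this.congr fun n => ?_
  simp [slope_def_field, Function.comp]

lemma taylor_lb (Ψ Ψ' Ψ'' : ℝ → ℝ) (δ₀ : ℝ) (hδ₀ : 0 < δ₀)
    (hd1 : ∀ s ∈ Icc (-δ₀) δ₀, HasDerivWithinAt Ψ (Ψ' s) (Icc (-δ₀) δ₀) s)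
    (hd2 : ∀ s ∈ Icc (-δ₀) δ₀, HasDerivWithinAt Ψ' (Ψ'' s) (Icc (-δ₀) δ₀) s)
    (hcont : ContinuousOn Ψ'' (Icc (-δ₀) δ₀)) (h0 : Ψ 0 = 0) (h0' : Ψ' 0 = 0)
    (η : ℝ) (hη : 0 < η) :
    ∃ δ : ℝ, 0 < δ ∧ ∀ s, |s| ≤ δ → (Ψ'' 0 / 2 - η) * s ^ 2 ≤ Ψ s := by
  have h0mem : (0 : ℝ) ∈ Icc (-δ₀) δ₀ := by constructor <;> linarith
  have hc0 : ContinuousWithinAt Ψ'' (Icc (-δ₀) δ₀) 0 := hcont 0 h0mem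
  rw [Metric.continuousWithinAt_iff] at hc0
  obtain ⟨δ₁, hδ₁pos, hδ₁⟩ := hc0 η hη
  set δ : ℝ := min (δ₁ / 2) δ₀ with hδdef
  have hδpos : 0 < δ := lt_min (by linarith) hδ₀
  have hδle : δ ≤ δ₀ := min_le_right _ _
  refine ⟨δ, hδpos, fun s hs => ?_⟩
  -- the small interval
  have hsub : Icc (-δ) δ ⊆ Icc (-δ₀) δ₀ := Icc_subset_Icc (by linarith) hδle
  have hΨ''bound : ∀ t ∈ Icc (-δ) δ, |Ψ'' t - Ψ'' 0| ≤ η := by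
    intro t ht
    have ht' : t ∈ Icc (-δ₀) δ₀ := hsub ht
    have hdist : dist t 0 < δ₁ := by
      rw [Real.dist_eq, sub_zero]
      have h1 : -δ ≤ t := ht.1
      have h2 : t ≤ δ := ht.2
      have h3 : δ ≤ δ₁ / 2 := min_le_left _ _
      rw [abs_lt]; constructor <;> linarith
    have := hδ₁ ht' hdist
    rw [Real.dist_eq] at this
    exact le_of_lt this
  -- Step A : |Ψ' t - Ψ'' 0 * t| ≤ η * |t| on Icc (-δ) δ
  have stepA : ∀ t ∈ Icc (-δ) δ, |Ψ' t - Ψ'' 0 * t| ≤ η * |t| := by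
    intro t ht
    have hconv : Convex ℝ (Icc (-δ) δ) := convex_Icc _ _
    have hderiv : ∀ x ∈ Icc (-δ) δ, HasDerivWithinAt (fun y => Ψ' y - Ψ'' 0 * y)
        (Ψ'' x - Ψ'' 0) (Icc (-δ) δ) x := by
      intro x hx
      have := ((hd2 x (hsub hx)).mono hsub).sub
        (((hasDerivWithinAt_id x (Icc (-δ) δ)).const_mul (Ψ'' 0)))
      exact this.congr_deriv (by simp)
    have hmem0 : (0:ℝ) ∈ Icc (-δ) δ := by constructor <;> [linarith; linarith]
    have := hconv.norm_image_sub_le_of_norm_hasDerivWithin_le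
      (f' := fun x => Ψ'' x - Ψ'' 0) hderiv
      (fun x hx => by simpa [Real.norm_eq_abs] using hΨ''bound x hx) hmem0 ht
    simpa [Real.norm_eq_abs, h0'] using this
  -- Step B
  have hs_abs : (0:ℝ) ≤ |s| := abs_nonneg s
  have hJsub : Icc (-|s|) (|s|) ⊆ Icc (-δ) δ := Icc_subset_Icc (neg_le_neg hs) hs
  have hJsub' : Icc (-|s|) (|s|) ⊆ Icc (-δ₀) δ₀ := hJsub.trans hsub
  have hconvJ : Convex ℝ (Icc (-(|s|)) (|s|)) := convex_Icc _ _
  have hderivB : ∀ x ∈ Icc (-|s|) (|s|), HasDerivWithinAt (fun y => Ψ y - Ψ'' 0 / 2 * y ^ 2)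
      (Ψ' x - Ψ'' 0 * x) (Icc (-|s|) (|s|)) x := by
    intro x hx
    have h1 := (hd1 x (hJsub' hx)).mono hJsub'
    have h2 : HasDerivWithinAt (fun y : ℝ => Ψ'' 0 / 2 * y ^ 2) (Ψ'' 0 / 2 * (2 * x))
        (Icc (-|s|) (|s|)) x := by
      have := ((hasDerivAt_pow 2 x).hasDerivWithinAt (s := Icc (-|s|) (|s|))).const_mul (Ψ'' 0 / 2)
      simpa using this
    have := h1.sub h2
    exact this.congr_deriv (by ring)
  have hboundB : ∀ x ∈ Icc (-|s|) (|s|), ‖Ψ' x - Ψ'' 0 * x‖ ≤ η * |s| := by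
    intro x hx
    have hx' : x ∈ Icc (-δ) δ := hJsub hx
    have := stepA x hx'
    have hxabs : |x| ≤ |s| := abs_le.mpr hx
    rw [Real.norm_eq_abs]
    calc |Ψ' x - Ψ'' 0 * x| ≤ η * |x| := this
    _ ≤ η * |s| := by nlinarith
  have hmem0J : (0:ℝ) ∈ Icc (-|s|) (|s|) := by constructor <;> simp [hs_abs, neg_nonpos]
  have hmemsJ : s ∈ Icc (-|s|) (|s|) := by
    constructor
    · exact neg_abs_le s
    · exact le_abs_self s
  have hB := hconvJ.norm_image_sub_le_of_norm_hasDerivWithin_le hderivB hboundB hmem0J hmemsJ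
  have hB' : |Ψ s - Ψ'' 0 / 2 * s ^ 2| ≤ η * s ^ 2 := by
    have habs2 : |s| * |s| = s ^ 2 := by rw [← abs_mul, abs_mul_self]; ring
    simpa [Real.norm_eq_abs, h0, sub_zero, mul_assoc, habs2, sq_abs] using hB.trans_eq (by
      rw [sub_zero, Real.norm_eq_abs]; rw [mul_assoc, habs2])
  have := abs_le.mp hB'
  nlinarith [this.1, this.2]

lemma pointwise_liminf (Ψ Ψ' Ψ'' : ℝ → ℝ) (kξ δ₀ : ℝ) (hk : 0 ≤ kξ) (hδ₀ : 0 < δ₀)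
    (hd1 : ∀ s ∈ Icc (-δ₀) δ₀, HasDerivWithinAt Ψ (Ψ' s) (Icc (-δ₀) δ₀) s)
    (hd2 : ∀ s ∈ Icc (-δ₀) δ₀, HasDerivWithinAt Ψ' (Ψ'' s) (Icc (-δ₀) δ₀) s)
    (hcont : ContinuousOn Ψ'' (Icc (-δ₀) δ₀)) (h0 : Ψ 0 = 0) (h0' : Ψ' 0 = 0)
    (εn : ℕ → ℝ) (hε : ∀ n, 0 < εn n) (sn : ℕ → ℝ) (a : ℝ)
    (hsdiv : Tendsto (fun n => sn n / εn n) atTop (𝓝 a))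
    (hsn0 : Tendsto sn atTop (𝓝 0)) :
    ENNReal.ofReal (kξ * Ψ'' 0 * a ^ 2) ≤
      liminf (fun n => 2 * ENNReal.ofReal (((εn n) ^ 2)⁻¹ * (kξ * Ψ (sn n)))) atTop := by
  set L := liminf (fun n => 2 * ENNReal.ofReal (((εn n) ^ 2)⁻¹ * (kξ * Ψ (sn n)))) atTop with hL
  have key : ∀ η : ℝ, 0 < η → ENNReal.ofReal (kξ * (Ψ'' 0 - 2 * η) * a ^ 2) ≤ L := by
    intro η hη
    obtain ⟨δ, hδpos, hδ⟩ := taylor_lb Ψ Ψ' Ψ'' δ₀ hδ₀ hd1 hd2 hcont h0 h0' η hη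
    have hev : ∀ᶠ n in atTop, |sn n| ≤ δ := by
      have := hsn0.eventually (Metric.ball_mem_nhds (0:ℝ) hδpos)
      filter_upwards [this] with n hn
      rw [Real.dist_eq, sub_zero] at hn
      exact hn.le
    have hle : ∀ᶠ n in atTop,
        ENNReal.ofReal (kξ * (Ψ'' 0 - 2 * η) * (sn n / εn n) ^ 2) ≤
          2 * ENNReal.ofReal (((εn n) ^ 2)⁻¹ * (kξ * Ψ (sn n))) := by
      filter_upwards [hev] with n hn
      have hεn := hε n
      have htay := hδ (sn n) hn
      have hreal : kξ * (Ψ'' 0 - 2 * η) * (sn n / εn n) ^ 2 ≤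
          2 * (((εn n) ^ 2)⁻¹ * (kξ * Ψ (sn n))) := by
        have hsq : (sn n / εn n) ^ 2 = (sn n) ^ 2 * ((εn n) ^ 2)⁻¹ := by
          rw [div_pow]; ring
        rw [hsq]
        have hmul : kξ * ((Ψ'' 0 / 2 - η) * (sn n) ^ 2) ≤ kξ * Ψ (sn n) :=
          mul_le_mul_of_nonneg_left htay hk
        have hinv : (0:ℝ) ≤ ((εn n) ^ 2)⁻¹ := by positivity
        nlinarith [mul_le_mul_of_nonneg_right hmul hinv]
      calc ENNReal.ofReal (kξ * (Ψ'' 0 - 2 * η) * (sn n / εn n) ^ 2)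
          ≤ ENNReal.ofReal (2 * (((εn n) ^ 2)⁻¹ * (kξ * Ψ (sn n)))) :=
            ENNReal.ofReal_le_ofReal hreal
        _ = 2 * ENNReal.ofReal (((εn n) ^ 2)⁻¹ * (kξ * Ψ (sn n))) := by
            rw [ENNReal.ofReal_mul (by norm_num : (0:ℝ) ≤ 2)]
            norm_num
    have hlim : Tendsto (fun n => ENNReal.ofReal (kξ * (Ψ'' 0 - 2 * η) * (sn n / εn n) ^ 2))
        atTop (𝓝 (ENNReal.ofReal (kξ * (Ψ'' 0 - 2 * η) * a ^ 2))) := by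
      apply (ENNReal.continuous_ofReal.tendsto _).comp
      exact (tendsto_const_nhds.mul (hsdiv.pow 2))
    calc ENNReal.ofReal (kξ * (Ψ'' 0 - 2 * η) * a ^ 2)
        = liminf (fun n => ENNReal.ofReal (kξ * (Ψ'' 0 - 2 * η) * (sn n / εn n) ^ 2)) atTop :=
          (hlim.liminf_eq).symm
      _ ≤ L := liminf_le_liminf hle
  refine ENNReal.le_of_forall_pos_le_add fun ε' hε' _ => ?_
  set η : ℝ := (ε' : ℝ) / (2 * kξ * a ^ 2 + 1) with hηdef
  have hden : (0:ℝ) < 2 * kξ * a ^ 2 + 1 := by positivity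
  have hηpos : 0 < η := div_pos hε' hden
  have hsplit : kξ * Ψ'' 0 * a ^ 2 = kξ * (Ψ'' 0 - 2 * η) * a ^ 2 + 2 * η * kξ * a ^ 2 := by ring
  have hsmall : 2 * η * kξ * a ^ 2 ≤ (ε' : ℝ) := by
    have h1 : η * (2 * kξ * a ^ 2 + 1) = (ε' : ℝ) := div_mul_cancel₀ _ hden.ne'
    nlinarith [sq_nonneg a, hk, hηpos.le]
  calc ENNReal.ofReal (kξ * Ψ'' 0 * a ^ 2)
      ≤ ENNReal.ofReal (kξ * (Ψ'' 0 - 2 * η) * a ^ 2) + ENNReal.ofReal (2 * η * kξ * a ^ 2) := by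
        rw [hsplit]; exact ENNReal.ofReal_add_le
    _ ≤ L + (ε' : ℝ≥0∞) := by
        refine add_le_add (key η hηpos) ?_
        rw [← ENNReal.ofReal_coe_nnreal]
        exact ENNReal.ofReal_le_ofReal hsmall

lemma one_div_nat_add_tendsto (c : ℝ) :
    Tendsto (fun n : ℕ => c / (n + 1)) atTop (𝓝 0) := by
  have h := tendsto_one_div_add_atTop_nhds_zero_nat (𝕜 := ℝ)
  have := h.const_mul c
  simpa [div_eq_mul_inv, mul_comm, mul_assoc, one_div] using this

lemma measurable_psi'_pt {d : ℕ} (Ψ Ψ' : Vec d → ℝ → ℝ) (δ₀ : ℝ)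
    (hΨmeas : ∀ s : ℝ, Measurable fun ξ => Ψ ξ s)
    (hd1 : ∀ ξ, ∀ s ∈ Icc (-δ₀) δ₀, HasDerivWithinAt (Ψ ξ) (Ψ' ξ s) (Icc (-δ₀) δ₀) s)
    (t : ℝ) (ht : t ∈ Icc (-δ₀) δ₀) (ht' : t < δ₀) :
    Measurable fun ξ => Ψ' ξ t := by
  set h : ℕ → ℝ := fun n => (δ₀ - t) / (n + 1) with hh
  have hpos : ∀ n, 0 < h n := fun n => div_pos (by linarith) (by positivity)
  have hmem : ∀ n, t + h n ≤ δ₀ := by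
    intro n
    have : h n ≤ δ₀ - t := by
      rw [hh]
      rw [div_le_iff₀ (by positivity : (0:ℝ) < (n:ℝ)+1)]
      nlinarith [Nat.cast_nonneg (α := ℝ) n]
    linarith
  have hlim : Tendsto h atTop (𝓝 0) := one_div_nat_add_tendsto _
  refine measurable_of_tendsto_metrizable
    (f := fun n ξ => (Ψ ξ (t + h n) - Ψ ξ t) / h n) (fun n => ?_) ?_
  · exact ((hΨmeas _).sub (hΨmeas _)).div_const _
  · rw [tendsto_pi_nhds]
    intro ξ
    exact tendsto_slope_seq (Ψ ξ) (Ψ' ξ t) δ₀ t ht h hpos hmem hlim (hd1 ξ t ht)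

lemma measurable_psi''_zero {d : ℕ} (Ψ Ψ' Ψ'' : Vec d → ℝ → ℝ) (δ₀ : ℝ) (hδ₀ : 0 < δ₀)
    (hΨmeas : ∀ s : ℝ, Measurable fun ξ => Ψ ξ s)
    (hd1 : ∀ ξ, ∀ s ∈ Icc (-δ₀) δ₀, HasDerivWithinAt (Ψ ξ) (Ψ' ξ s) (Icc (-δ₀) δ₀) s)
    (hd2 : ∀ ξ, ∀ s ∈ Icc (-δ₀) δ₀, HasDerivWithinAt (Ψ' ξ) (Ψ'' ξ s) (Icc (-δ₀) δ₀) s)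
    (h0' : ∀ ξ, Ψ' ξ 0 = 0) :
    Measurable fun ξ => Ψ'' ξ 0 := by
  set h : ℕ → ℝ := fun n => δ₀ / (n + 2) with hh
  have hpos : ∀ n, 0 < h n := fun n => div_pos hδ₀ (by positivity)
  have hlt : ∀ n, h n < δ₀ := by
    intro n
    rw [hh]
    rw [div_lt_iff₀ (by positivity : (0:ℝ) < (n:ℝ)+2)]
    nlinarith [Nat.cast_nonneg (α := ℝ) n]
  have hmemIcc : ∀ n, h n ∈ Icc (-δ₀) δ₀ := fun n =>
    ⟨by nlinarith [hpos n], (hlt n).le⟩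
  have hmem : ∀ n, (0:ℝ) + h n ≤ δ₀ := fun n => by simpa using (hlt n).le
  have hlim : Tendsto h atTop (𝓝 0) := by
    have := one_div_nat_add_tendsto (δ₀)
    -- h n = δ₀ / (n+2) ; reindex
    have h2 : Tendsto (fun n : ℕ => δ₀ / ((n:ℝ) + 2)) atTop (𝓝 0) := by
      have := (one_div_nat_add_tendsto δ₀).comp (tendsto_add_atTop_nat 1)
      refine this.congr fun n => ?_
      simp only [Function.comp]
      push_cast
      ring_nf
    exact h2
  have h0mem : (0:ℝ) ∈ Icc (-δ₀) δ₀ := ⟨by linarith, hδ₀.le⟩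
  refine measurable_of_tendsto_metrizable
    (f := fun n ξ => (Ψ' ξ (0 + h n) - Ψ' ξ 0) / h n) (fun n => ?_) ?_
  · have hm1 : Measurable fun ξ => Ψ' ξ (0 + h n) := by
      simpa using measurable_psi'_pt Ψ Ψ' δ₀ hΨmeas hd1 (h n) (hmemIcc n) (hlt n)
    have hm0 : Measurable fun ξ => Ψ' ξ 0 := by
      simp only [h0']; exact measurable_const
    exact (hm1.sub hm0).div_const _
  · rw [tendsto_pi_nhds]
    intro ξ
    exact tendsto_slope_seq (Ψ' ξ) (Ψ'' ξ 0) δ₀ 0 h0mem h hpos hmem hlim (hd2 ξ 0 h0mem)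

section meas
variable {d : ℕ} (μ : Measure (Vec d)) [SFinite μ]

lemma aemeasurable_dq {v : Vec d → Vec d} (hv : AEStronglyMeasurable v μ) :
    AEMeasurable (fun z : Vec d × Vec d => Dq v z.2 z.1) (μ.prod μ) := by
  have h1 : AEMeasurable (fun z : Vec d × Vec d => v z.1) (μ.prod μ) :=
    (hv.comp_quasiMeasurePreserving Measure.quasiMeasurePreserving_fst).aemeasurable
  have h2 : AEMeasurable (fun z : Vec d × Vec d => v z.2) (μ.prod μ) :=
    (hv.comp_quasiMeasurePreserving Measure.quasiMeasurePreserving_snd).aemeasurable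
  have hc : Measurable (fun z : Vec d × Vec d => ‖z.2 - z.1‖⁻¹) :=
    (continuous_snd.sub continuous_fst).norm.measurable.inv
  exact hc.aemeasurable.smul (h2.sub h1)

lemma measurable_di :
    Measurable (fun z : Vec d × Vec d => Di z.2 z.1) := by
  have hc : Measurable (fun z : Vec d × Vec d => ‖z.2 - z.1‖⁻¹) :=
    (continuous_snd.sub continuous_fst).norm.measurable.inv
  exact hc.smul (continuous_snd.sub continuous_fst).measurable

lemma measurable_uncurry_clamp (Ψ : Vec d → ℝ → ℝ)
    (hΨmeas : ∀ s : ℝ, Measurable fun ξ => Ψ ξ s)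
    (hΨcont : ∀ ξ, ContinuousOn (Ψ ξ) (Ici (-1))) :
    Measurable (Function.uncurry fun (s : ℝ) (ξ : Vec d) => Ψ ξ (max s (-1))) := by
  refine measurable_uncurry_of_continuous_of_measurable
    (u := fun (s : ℝ) (ξ : Vec d) => Ψ ξ (max s (-1))) (fun ξ => ?_) (fun s => hΨmeas _)
  have hclamp : Continuous (fun s : ℝ => max s (-1)) := continuous_id.max continuous_const
  exact (hΨcont ξ).comp_continuous hclamp (fun s => mem_Ici.mpr (le_max_right _ _))

lemma aemeasurable_w_integrand (k : Vec d → ℝ) (Ψ : Vec d → ℝ → ℝ)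
    (hk : Measurable k) (hΨmeas : ∀ s : ℝ, Measurable fun ξ => Ψ ξ s)
    (hΨcont : ∀ ξ, ContinuousOn (Ψ ξ) (Ici (-1)))
    {v : Vec d → Vec d} (hv : AEStronglyMeasurable v μ) (e : ℝ) :
    AEMeasurable (fun z : Vec d × Vec d =>
      ENNReal.ofReal (k (z.2 - z.1) * Ψ (z.2 - z.1) (‖Di z.2 z.1 + e • Dq v z.2 z.1‖ - 1)))
      (μ.prod μ) := by
  have hS : AEMeasurable (fun z : Vec d × Vec d =>
      ‖Di z.2 z.1 + e • Dq v z.2 z.1‖ - 1) (μ.prod μ) := by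
    have := ((measurable_di (d := d)).aemeasurable.add
      ((aemeasurable_dq μ hv).const_smul e)).norm
    exact this.sub aemeasurable_const
  have hξ : Measurable (fun z : Vec d × Vec d => z.2 - z.1) :=
    (continuous_snd.sub continuous_fst).measurable
  have hjoint := measurable_uncurry_clamp (d := d) Ψ hΨmeas hΨcont
  have hΨS : AEMeasurable (fun z : Vec d × Vec d =>
      Ψ (z.2 - z.1) (‖Di z.2 z.1 + e • Dq v z.2 z.1‖ - 1)) (μ.prod μ) := by
    have hpair : AEMeasurable (fun z : Vec d × Vec d =>
        ((‖Di z.2 z.1 + e • Dq v z.2 z.1‖ - 1 : ℝ), z.2 - z.1)) (μ.prod μ) :=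
      hS.prodMk hξ.aemeasurable
    have := hjoint.comp_aemeasurable hpair
    refine this.congr (Filter.Eventually.of_forall fun z => ?_)
    have hge : (-1:ℝ) ≤ ‖Di z.2 z.1 + e • Dq v z.2 z.1‖ - 1 := by
      linarith [norm_nonneg (Di z.2 z.1 + e • Dq v z.2 z.1)]
    simp [Function.uncurry, Function.comp, max_eq_left hge]
  exact ENNReal.measurable_ofReal.comp_aemeasurable
    (((hk.comp hξ).aemeasurable).mul hΨS)

lemma aemeasurable_q_integrand (ρ : Vec d → ℝ) (hρ : Measurable ρ)
    {v : Vec d → Vec d} (hv : AEStronglyMeasurable v μ) :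
    AEMeasurable (fun z : Vec d × Vec d =>
      ENNReal.ofReal (ρ (z.2 - z.1) * (inner ℝ (Dq v z.2 z.1) (Di z.2 z.1) : ℝ) ^ 2))
      (μ.prod μ) := by
  have hξ : Measurable (fun z : Vec d × Vec d => z.2 - z.1) :=
    (continuous_snd.sub continuous_fst).measurable
  have hinner : AEMeasurable (fun z : Vec d × Vec d =>
      (inner ℝ (Dq v z.2 z.1) (Di z.2 z.1) : ℝ)) (μ.prod μ) :=
    AEMeasurable.inner (aemeasurable_dq μ hv) (measurable_di (d := d)).aemeasurable
  exact ENNReal.measurable_ofReal.comp_aemeasurable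
    (((hρ.comp hξ).aemeasurable).mul (hinner.pow_const 2))
end meas

lemma pointwise_vec {d : ℕ} (Ψ Ψ' Ψ'' : ℝ → ℝ) (kξ δ₀ : ℝ) (hk : 0 ≤ kξ) (hδ₀ : 0 < δ₀)
    (hd1 : ∀ s ∈ Icc (-δ₀) δ₀, HasDerivWithinAt Ψ (Ψ' s) (Icc (-δ₀) δ₀) s)
    (hd2 : ∀ s ∈ Icc (-δ₀) δ₀, HasDerivWithinAt Ψ' (Ψ'' s) (Icc (-δ₀) δ₀) s)
    (hcont : ContinuousOn Ψ'' (Icc (-δ₀) δ₀)) (h0 : Ψ 0 = 0) (h0' : Ψ' 0 = 0)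
    (εn : ℕ → ℝ) (hε : ∀ n, 0 < εn n) (hεlim : Tendsto εn atTop (𝓝 0))
    (Dn : ℕ → Vec d) (D : Vec d) (hDn : Tendsto Dn atTop (𝓝 D))
    (i : Vec d) (hi : ‖i‖ = 1) :
    ENNReal.ofReal ((kξ * Ψ'' 0) * (inner ℝ D i : ℝ) ^ 2) ≤
      liminf (fun n => 2 * ENNReal.ofReal (((εn n) ^ 2)⁻¹ *
        (kξ * Ψ (‖i + εn n • Dn n‖ - 1)))) atTop := by
  set sn : ℕ → ℝ := fun n => ‖i + εn n • Dn n‖ - 1 with hsn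
  have hsmul : Tendsto (fun n => εn n • Dn n) atTop (𝓝 (0 : Vec d)) := by
    have := hεlim.smul hDn
    simpa using this
  have hsn0 : Tendsto sn atTop (𝓝 0) := by
    have : Tendsto (fun n => ‖i + εn n • Dn n‖ - 1) atTop (𝓝 (‖i + (0 : Vec d)‖ - 1)) :=
      ((tendsto_const_nhds.add hsmul).norm).sub_const 1
    simpa [hi] using this
  have hsdiv : Tendsto (fun n => sn n / εn n) atTop (𝓝 (inner ℝ D i : ℝ)) := by
    have hid : ∀ n, sn n / εn n =
        (2 * (inner ℝ i (Dn n) : ℝ) + εn n * ‖Dn n‖ ^ 2) / (‖i + εn n • Dn n‖ + 1) := by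
      intro n
      have hεn := hε n
      set A := ‖i + εn n • Dn n‖ with hA
      have hA0 : 0 ≤ A := norm_nonneg _
      have hA1 : 0 < A + 1 := by linarith
      have hsq : A ^ 2 = 1 + εn n * (2 * (inner ℝ i (Dn n) : ℝ) + εn n * ‖Dn n‖ ^ 2) := by
        rw [hA, norm_add_sq_real, real_inner_smul_right, norm_smul, hi]
        rw [mul_pow, Real.norm_eq_abs, sq_abs]
        ring
      rw [hsn]
      rw [div_eq_div_iff hεn.ne' hA1.ne']
      show (A - 1) * (A + 1) = (2 * (inner ℝ i (Dn n) : ℝ) + εn n * ‖Dn n‖ ^ 2) * εn n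
      nlinarith [hsq]
    rw [show (inner ℝ D i : ℝ) = (2 * (inner ℝ i D : ℝ) + 0 * ‖D‖ ^ 2) / (‖i + (0:Vec d)‖ + 1) by
      rw [real_inner_comm]; simp [hi]; ring]
    refine Tendsto.congr (fun n => (hid n).symm) (Tendsto.div ?_ ?_ ?_)
    · exact (tendsto_const_nhds.mul (tendsto_const_nhds.inner hDn)).add
        (hεlim.mul (hDn.norm.pow 2))
    · exact ((tendsto_const_nhds.add hsmul).norm).add_const 1
    · simp [hi]
  have := pointwise_liminf Ψ Ψ' Ψ'' kξ δ₀ hk hδ₀ hd1 hd2 hcont h0 h0' εn hε sn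
    (inner ℝ D i : ℝ) hsdiv hsn0
  calc ENNReal.ofReal ((kξ * Ψ'' 0) * (inner ℝ D i : ℝ) ^ 2)
      = ENNReal.ofReal (kξ * Ψ'' 0 * (inner ℝ D i : ℝ) ^ 2) := by ring_nf
    _ ≤ _ := this

lemma loadTerm_tendsto {d : ℕ} {μ : Measure (Vec d)} (l u : Vec d → Vec d)
    (hl : MemLp l 2 μ) (hu : MemLp u 2 μ)
    (us : ℕ → Vec d → Vec d) (hus : ∀ n, MemLp (us n) 2 μ)
    (husconv : Tendsto (fun n => eLpNorm (us n - u) 2 μ) atTop (𝓝 0)) :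
    Tendsto (fun n => ∫ x, (inner ℝ (l x) (us n x) : ℝ) ∂μ) atTop
      (𝓝 (∫ x, (inner ℝ (l x) (u x) : ℝ) ∂μ)) := by
  set F : Lp (Vec d) 2 μ := hl.toLp l with hF
  set U : Lp (Vec d) 2 μ := hu.toLp u with hU
  set Un : ℕ → Lp (Vec d) 2 μ := fun n => (hus n).toLp (us n) with hUn
  have hUnU : Tendsto Un atTop (𝓝 U) := by
    rw [tendsto_iff_norm_sub_tendsto_zero]
    have heq : ∀ n, ‖Un n - U‖ = (eLpNorm (us n - u) 2 μ).toReal := by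
      intro n
      show ‖(hus n).toLp (us n) - hu.toLp u‖ = _
      rw [← MemLp.toLp_sub (hus n) hu]
      exact MeasureTheory.Lp.norm_toLp (us n - u) ((hus n).sub hu)
    have htr : Tendsto (fun n => (eLpNorm (us n - u) 2 μ).toReal) atTop (𝓝 0) := by
      have := (ENNReal.tendsto_toReal (by simp : (0:ℝ≥0∞) ≠ ⊤)).comp husconv
      simpa [Function.comp_def] using this
    exact htr.congr fun n => (heq n).symm
  have hinner : Tendsto (fun n => (inner ℝ F (Un n) : ℝ)) atTop (𝓝 (inner ℝ F U : ℝ)) :=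
    tendsto_const_nhds.inner hUnU
  have heqn : ∀ n, (inner ℝ F (Un n) : ℝ) = ∫ x, (inner ℝ (l x) (us n x) : ℝ) ∂μ := by
    intro n
    rw [MeasureTheory.L2.inner_def]
    apply integral_congr_ae
    filter_upwards [hl.coeFn_toLp, (hus n).coeFn_toLp] with x h1 h2
    rw [h1, h2]
  have heqU : (inner ℝ F U : ℝ) = ∫ x, (inner ℝ (l x) (u x) : ℝ) ∂μ := by
    rw [MeasureTheory.L2.inner_def]
    apply integral_congr_ae
    filter_upwards [hl.coeFn_toLp, hu.coeFn_toLp] with x h1 h2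
    rw [h1, h2]
  rw [← heqU]
  exact hinner.congr heqn

end Helpers

/-- **Lemma 3.5** (liminf inequality for linearization). For every `u ∈ L²(Ω;ℝ^d)`,
every sequence `ε_j → 0⁺` and every sequence `u_j → u` strongly in `L²(Ω;ℝ^d)`,
`liminf_j Ē_{ε_j}(u_j) ≥ Ē₀(u)`. -/
theorem linearization_liminf_inequality
    {d : ℕ} (Ω : Set (Vec d)) (hΩopen : IsOpen Ω) (hΩconn : IsConnected Ω)
    (hΩbdd : Bornology.IsBounded Ω)
    (k : Vec d → ℝ) (Ψ Ψ' Ψ'' : Vec d → ℝ → ℝ) (δ₀ c₁ c₂ : ℝ)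
    (hw : MicroelasticAssumptions k Ψ Ψ' Ψ'' δ₀ c₁ c₂)
    (l : Vec d → Vec d) (hl : MemLp l 2 (volume.restrict Ω))
    (u : Vec d → Vec d) (hu : MemLp u 2 (volume.restrict Ω))
    (ε : ℕ → ℝ) (hεpos : ∀ j, 0 < ε j) (hεlim : Tendsto ε atTop (𝓝 0))
    (us : ℕ → Vec d → Vec d) (hus : ∀ j, MemLp (us j) 2 (volume.restrict Ω))
    (husconv : Tendsto (fun j => eLpNorm (us j - u) 2 (volume.restrict Ω)) atTop (𝓝 0)) :
    Elin (fun ξ => k ξ * Ψ'' ξ 0) l Ω u ≤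
      Filter.liminf (fun j => Enl (fun ξ s => k ξ * Ψ ξ s) l Ω (ε j) (us j)) atTop := by
  classical
  obtain ⟨hk_meas, hk_nonneg, hΨmeas, hΨcont, hΨnonneg, hΨlip, hδ₀, hd1, hd2, hΨ''cont,
    hΨ0, hΨ'0, hΨ''0pos, hΨlb, hc₁pos, hlow, hc₂pos, hupp, hρloc⟩ := hw
  set μ : Measure (Vec d) := volume.restrict Ω with hμdef
  set f : ℕ → EReal := fun j => Enl (fun ξ s => k ξ * Ψ ξ s) l Ω (ε j) (us j) with hfdef
  by_contra hcon
  push_neg at hcon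
  obtain ⟨r', hr1, hr2⟩ := exists_between hcon
  have hr'top : r' ≠ ⊤ := (hr2.trans_le le_top).ne
  have hr'bot : r' ≠ ⊥ := (bot_le.trans_lt hr1).ne'
  lift r' to ℝ using ⟨hr'top, hr'bot⟩ with r hr
  -- extract subsequence with f < r
  have hfreq : ∃ᶠ j in atTop, f j < (r : EReal) := frequently_lt_of_liminf_lt (h := hr1)
  obtain ⟨φ, hφmono, hφ⟩ := Filter.extraction_of_frequently_atTop hfreq
  have husconvφ : Tendsto (fun n => eLpNorm (us (φ n) - u) 2 μ) atTop (𝓝 0) :=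
    husconv.comp hφmono.tendsto_atTop
  have htim : TendstoInMeasure μ (fun n => us (φ n)) atTop u :=
    tendstoInMeasure_of_tendsto_eLpNorm (by norm_num)
      (fun n => (hus (φ n)).aestronglyMeasurable) hu.aestronglyMeasurable husconvφ
  obtain ⟨ns, hns, hae⟩ := htim.exists_seq_tendsto_ae
  set ψ : ℕ → ℕ := φ ∘ ns with hψdef
  have hψmono : StrictMono ψ := hφmono.comp hns
  have hψlt : ∀ n, f (ψ n) < (r : EReal) := fun n => hφ (ns n)
  have haeψ : ∀ᵐ x ∂μ, Tendsto (fun n => us (ψ n) x) atTop (𝓝 (u x)) := hae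
  have hεψlim : Tendsto (fun n => ε (ψ n)) atTop (𝓝 0) := hεlim.comp hψmono.tendsto_atTop
  -- load terms
  have husconvψ : Tendsto (fun n => eLpNorm (us (ψ n) - u) 2 μ) atTop (𝓝 0) :=
    husconv.comp hψmono.tendsto_atTop
  have hloadconv : Tendsto (fun n => loadTerm l (us (ψ n)) Ω) atTop
      (𝓝 (loadTerm l u Ω)) :=
    loadTerm_tendsto l u hl hu (fun n => us (ψ n)) (fun n => hus (ψ n)) husconvψ
  -- finiteness of the nonlinear integrals along the subsequence, and real bounds
  have hWne : ∀ n, wIntegral (fun ξ s => k ξ * Ψ ξ s) (ε (ψ n)) (us (ψ n)) Ω ≠ ⊤ := by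
    intro n
    by_contra h
    have h2 : Enl (fun ξ s => k ξ * Ψ ξ s) l Ω (ε (ψ n)) (us (ψ n)) < (r : EReal) := hψlt n
    unfold Enl at h2
    rw [if_neg (by simpa using h)] at h2
    exact not_top_lt h2
  have hreal : ∀ n, ((ε (ψ n)) ^ 2)⁻¹ *
      (wIntegral (fun ξ s => k ξ * Ψ ξ s) (ε (ψ n)) (us (ψ n)) Ω).toReal -
      loadTerm l (us (ψ n)) Ω < r := by
    intro n
    have h2 : Enl (fun ξ s => k ξ * Ψ ξ s) l Ω (ε (ψ n)) (us (ψ n)) < (r : EReal) := hψlt n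
    unfold Enl at h2
    rw [if_pos (hWne n)] at h2
    exact_mod_cast h2
  -- 0 ≤ r + load limit
  have hrload : -loadTerm l u Ω ≤ r := by
    refine le_of_tendsto hloadconv.neg (Filter.Eventually.of_forall fun n => ?_)
    have h1 := hreal n
    have h2 : 0 ≤ ((ε (ψ n)) ^ 2)⁻¹ *
        (wIntegral (fun ξ s => k ξ * Ψ ξ s) (ε (ψ n)) (us (ψ n)) Ω).toReal := by positivity
    linarith
  -- product measure and measurability
  set μ2 : Measure (Vec d × Vec d) := μ.prod μ with hμ2def
  have hρmeas : Measurable (fun ξ => k ξ * Ψ'' ξ 0) :=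
    hk_meas.mul (measurable_psi''_zero Ψ Ψ' Ψ'' δ₀ hδ₀ hΨmeas hd1 hd2 hΨ'0)
  have hWprod : ∀ n, wIntegral (fun ξ s => k ξ * Ψ ξ s) (ε (ψ n)) (us (ψ n)) Ω =
      ∫⁻ z, ENNReal.ofReal (k (z.2 - z.1) * Ψ (z.2 - z.1)
        (‖Di z.2 z.1 + ε (ψ n) • Dq (us (ψ n)) z.2 z.1‖ - 1)) ∂μ2 := by
    intro n
    rw [MeasureTheory.lintegral_prod _
      (aemeasurable_w_integrand μ k Ψ hk_meas hΨmeas hΨcont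
        (hus (ψ n)).aestronglyMeasurable (ε (ψ n)))]
    rfl
  set G : ℕ → Vec d × Vec d → ℝ≥0∞ := fun n z =>
    ENNReal.ofReal (((ε (ψ n)) ^ 2)⁻¹ * (k (z.2 - z.1) * Ψ (z.2 - z.1)
      (‖Di z.2 z.1 + ε (ψ n) • Dq (us (ψ n)) z.2 z.1‖ - 1))) with hGdef
  have hGsplit : ∀ n z, G n z = ENNReal.ofReal (((ε (ψ n)) ^ 2)⁻¹) *
      ENNReal.ofReal (k (z.2 - z.1) * Ψ (z.2 - z.1)
        (‖Di z.2 z.1 + ε (ψ n) • Dq (us (ψ n)) z.2 z.1‖ - 1)) := by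
    intro n z
    rw [← ENNReal.ofReal_mul (by positivity)]
  have hGmeas : ∀ n, AEMeasurable (G n) μ2 := by
    intro n
    have h1 := (aemeasurable_w_integrand μ k Ψ hk_meas hΨmeas hΨcont
      (hus (ψ n)).aestronglyMeasurable (ε (ψ n))).const_mul
      (ENNReal.ofReal (((ε (ψ n)) ^ 2)⁻¹))
    exact (funext (hGsplit n) : G n = _) ▸ h1
  have hGint : ∀ n, ∫⁻ z, G n z ∂μ2 = ENNReal.ofReal (((ε (ψ n)) ^ 2)⁻¹) *
      wIntegral (fun ξ s => k ξ * Ψ ξ s) (ε (ψ n)) (us (ψ n)) Ω := by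
    intro n
    rw [hWprod n]
    rw [show (fun z => G n z) = fun z => ENNReal.ofReal (((ε (ψ n)) ^ 2)⁻¹) *
      ENNReal.ofReal (k (z.2 - z.1) * Ψ (z.2 - z.1)
        (‖Di z.2 z.1 + ε (ψ n) • Dq (us (ψ n)) z.2 z.1‖ - 1)) from funext (hGsplit n)]
    exact lintegral_const_mul' _ _ ENNReal.ofReal_ne_top
  have hGbound : ∀ n, ∫⁻ z, G n z ∂μ2 ≤ ENNReal.ofReal (r + loadTerm l (us (ψ n)) Ω) := by
    intro n
    rw [hGint n, ← ENNReal.ofReal_toReal (hWne n), ← ENNReal.ofReal_mul (by positivity)]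
    exact ENNReal.ofReal_le_ofReal (by linarith [hreal n])
  -- a.e. pointwise liminf inequality
  have hconv1 : ∀ᵐ z ∂μ2, Tendsto (fun n => us (ψ n) z.1) atTop (𝓝 (u z.1)) :=
    MeasureTheory.Measure.quasiMeasurePreserving_fst.ae haeψ
  have hconv2 : ∀ᵐ z ∂μ2, Tendsto (fun n => us (ψ n) z.2) atTop (𝓝 (u z.2)) :=
    MeasureTheory.Measure.quasiMeasurePreserving_snd.ae haeψ
  have hkey : ∀ᵐ z ∂μ2, ENNReal.ofReal ((k (z.2 - z.1) * Ψ'' (z.2 - z.1) 0) *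
      (inner ℝ (Dq u z.2 z.1) (Di z.2 z.1) : ℝ) ^ 2) ≤ liminf (fun n => 2 * G n z) atTop := by
    filter_upwards [hconv1, hconv2] with z hz1 hz2
    rcases eq_or_ne z.2 z.1 with heq | hne
    · have hzero : Dq u z.2 z.1 = 0 := by rw [Dq, heq, sub_self]; simp
      simp [hzero]
    · have hξ0 : z.2 - z.1 ≠ 0 := sub_ne_zero.mpr hne
      have hi : ‖Di z.2 z.1‖ = 1 := by
        rw [Di, norm_smul, norm_inv, norm_norm,
          inv_mul_cancel₀ (norm_ne_zero_iff.mpr hξ0)]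
      have hDn : Tendsto (fun n => Dq (us (ψ n)) z.2 z.1) atTop (𝓝 (Dq u z.2 z.1)) := by
        have := (hz2.sub hz1).const_smul (‖z.2 - z.1‖⁻¹)
        simpa [Dq] using this
      exact pointwise_vec (Ψ (z.2 - z.1)) (Ψ' (z.2 - z.1)) (Ψ'' (z.2 - z.1))
        (k (z.2 - z.1)) δ₀ (hk_nonneg _) hδ₀ (hd1 _) (hd2 _) (hΨ''cont _) (hΨ0 _) (hΨ'0 _)
        (fun n => ε (ψ n)) (fun n => hεpos _) hεψlim _ _ hDn _ hi
  -- Fatou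
  have hfatou : (∫⁻ z, ENNReal.ofReal ((k (z.2 - z.1) * Ψ'' (z.2 - z.1) 0) *
      (inner ℝ (Dq u z.2 z.1) (Di z.2 z.1) : ℝ) ^ 2) ∂μ2) ≤
      liminf (fun n => 2 * ∫⁻ z, G n z ∂μ2) atTop := by
    calc (∫⁻ z, ENNReal.ofReal ((k (z.2 - z.1) * Ψ'' (z.2 - z.1) 0) *
        (inner ℝ (Dq u z.2 z.1) (Di z.2 z.1) : ℝ) ^ 2) ∂μ2)
        ≤ ∫⁻ z, liminf (fun n => 2 * G n z) atTop ∂μ2 := lintegral_mono_ae hkey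
      _ ≤ liminf (fun n => ∫⁻ z, 2 * G n z ∂μ2) atTop :=
          lintegral_liminf_le' (fun n => (hGmeas n).const_mul 2)
      _ = liminf (fun n => 2 * ∫⁻ z, G n z ∂μ2) atTop := by
          apply Filter.liminf_congr
          filter_upwards with n
          exact lintegral_const_mul' 2 _ (by norm_num)
  have hlim_bound : liminf (fun n => 2 * ∫⁻ z, G n z ∂μ2) atTop ≤
      2 * ENNReal.ofReal (r + loadTerm l u Ω) := by
    have h1 : Tendsto (fun n => 2 * ENNReal.ofReal (r + loadTerm l (us (ψ n)) Ω)) atTop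
        (𝓝 (2 * ENNReal.ofReal (r + loadTerm l u Ω))) := by
      apply ENNReal.Tendsto.const_mul
      · exact (ENNReal.continuous_ofReal.tendsto _).comp (tendsto_const_nhds.add hloadconv)
      · exact Or.inr (by norm_num)
    calc liminf (fun n => 2 * ∫⁻ z, G n z ∂μ2) atTop
        ≤ liminf (fun n => 2 * ENNReal.ofReal (r + loadTerm l (us (ψ n)) Ω)) atTop :=
          liminf_le_liminf (Filter.Eventually.of_forall fun n =>
            mul_le_mul_right (hGbound n) 2)
      _ = _ := h1.liminf_eq
  -- qIntegral over the product
  have hqprod : qIntegral (fun ξ => k ξ * Ψ'' ξ 0) u Ω =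
      ∫⁻ z, ENNReal.ofReal ((k (z.2 - z.1) * Ψ'' (z.2 - z.1) 0) *
        (inner ℝ (Dq u z.2 z.1) (Di z.2 z.1) : ℝ) ^ 2) ∂μ2 := by
    rw [MeasureTheory.lintegral_prod _
      (aemeasurable_q_integrand μ _ hρmeas hu.aestronglyMeasurable)]
    rfl
  have hqle : qIntegral (fun ξ => k ξ * Ψ'' ξ 0) u Ω ≤
      2 * ENNReal.ofReal (r + loadTerm l u Ω) := by
    rw [hqprod]; exact hfatou.trans hlim_bound
  have hqne : qIntegral (fun ξ => k ξ * Ψ'' ξ 0) u Ω ≠ ⊤ :=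
    (hqle.trans_lt (ENNReal.mul_lt_top (by norm_num) ENNReal.ofReal_lt_top)).ne
  have hmem : MemXrho (fun ξ => k ξ * Ψ'' ξ 0) u Ω := ⟨hu, hqne⟩
  have htoReal : (qIntegral (fun ξ => k ξ * Ψ'' ξ 0) u Ω).toReal ≤
      2 * (r + loadTerm l u Ω) := by
    have h2 := hqle
    rw [show (2 : ℝ≥0∞) * ENNReal.ofReal (r + loadTerm l u Ω) =
        ENNReal.ofReal (2 * (r + loadTerm l u Ω)) by
      rw [ENNReal.ofReal_mul (by norm_num : (0:ℝ) ≤ 2)]; norm_num] at h2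
    exact ENNReal.toReal_le_of_le_ofReal (by linarith [hrload]) h2
  have hElin : Elin (fun ξ => k ξ * Ψ'' ξ 0) l Ω u ≤ (r : EReal) := by
    unfold Elin
    rw [if_pos hmem]
    have hfin : (1 / 2 : ℝ) * (qIntegral (fun ξ => k ξ * Ψ'' ξ 0) u Ω).toReal -
        loadTerm l u Ω ≤ r := by linarith [htoReal]
    exact_mod_cast hfin
  exact absurd hElin (not_le.mpr hr2)
end
end
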